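/- Let A, B, C, D, E, z be complex numbers and x, y positive real numbers with xy > |z|². If Az + i(Bx - Cy) + D z̄ = 0 and |A|² + |D|² + |E|² + 2Re(B̄ C) = 0, then A = B = C = D = E = 0. -/

import Mathlib

open Complex
set_option maxHeartbeats 1000000 in

lemma aux_real (nA nB nC nD nE nz x y : ℝ)
    (hnA : 0 ≤ nA) (hnB : 0 ≤ nB) (hnC : 0 ≤ nC) (hnD : 0 ≤ nD) (hnE : 0 ≤ nE)
    (hnz : 0 ≤ nz) (hx : 0 < x) (hy : 0 < y) (hxy : nz^2 < x*y)
    (main : x*nB^2 + y*nC^2 + (x+y)*(nA^2+nD^2+nE^2)/2 ≤ (nA+nD)*nz*(nB+nC)) :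
    nA = 0 ∧ nB = 0 ∧ nC = 0 ∧ nD = 0 ∧ nE = 0 := by
  have main4 := mul_le_mul_of_nonneg_left main (by positivity : (0:ℝ) ≤ 4*x*y)
  have sq1 : 0 ≤ y*(2*x*nB - (nA+nD)*nz)^2 := by positivity
  have sq2 : 0 ≤ x*(2*y*nC - (nA+nD)*nz)^2 := by positivity
  have hstep : 2*x*y*(x+y)*(nA^2+nD^2+nE^2) ≤ (x+y)*((nA+nD)^2*nz^2) := by
    linarith [main4, sq1, sq2]
  have hq : (nA+nD)^2*nz^2 ≤ 2*(nA^2+nD^2)*nz^2 := by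
    nlinarith [sq_nonneg (nA-nD), sq_nonneg nz]
  have hq2 : (x+y)*((nA+nD)^2*nz^2) ≤ (x+y)*(2*(nA^2+nD^2)*nz^2) :=
    mul_le_mul_of_nonneg_left hq (by linarith)
  have h3 : 2*x*y*(x+y)*(nA^2+nD^2+nE^2) ≤ 2*(x+y)*(nA^2+nD^2)*nz^2 := by
    linarith [hstep, hq2]
  have hAD : nA^2 + nD^2 ≤ 0 := by
    by_contra hcon
    push_neg at hcon
    have h4 : 2*(x+y)*(nA^2+nD^2)*nz^2 < 2*(x+y)*(nA^2+nD^2)*(x*y) :=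
      mul_lt_mul_of_pos_left hxy (by positivity)
    have h5 : 0 ≤ 2*x*y*(x+y)*nE^2 := by positivity
    linarith [h3, h4, h5]
  have hA2 : nA^2 = 0 := le_antisymm (by nlinarith [sq_nonneg nD]) (sq_nonneg nA)
  have hD2 : nD^2 = 0 := le_antisymm (by nlinarith [sq_nonneg nA]) (sq_nonneg nD)
  have hA0 : nA = 0 := sq_eq_zero_iff.mp hA2
  have hD0 : nD = 0 := sq_eq_zero_iff.mp hD2
  rw [hA0, hD0] at main
  have hyC : 0 ≤ y*nC^2 := by positivity
  have hxB : 0 ≤ x*nB^2 := by positivity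
  have hE' : 0 ≤ (x+y)*nE^2/2 := by positivity
  have hB2 : nB^2 ≤ 0 := by nlinarith [main, hyC, hE', hx]
  have hC2 : nC^2 ≤ 0 := by nlinarith [main, hxB, hE', hy]
  have hE2 : nE^2 ≤ 0 := by nlinarith [main, hxB, hyC]
  have hB0 : nB = 0 := sq_eq_zero_iff.mp (le_antisymm hB2 (sq_nonneg nB))
  have hC0 : nC = 0 := sq_eq_zero_iff.mp (le_antisymm hC2 (sq_nonneg nC))
  have hE0 : nE = 0 := sq_eq_zero_iff.mp (le_antisymm hE2 (sq_nonneg nE))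
  exact ⟨hA0, hB0, hC0, hD0, hE0⟩


theorem stmt_2 (A B C D E z : ℂ) (x y : ℝ) (hx : 0 < x) (hy : 0 < y)
    (hxy : ‖z‖ ^ 2 < x * y)
    (hbal : A * z + Complex.I * (B * (x : ℂ) - C * (y : ℂ)) + D * (starRingEnd ℂ z) = 0)
    (hskt : ‖A‖ ^ 2 + ‖D‖ ^ 2 + ‖E‖ ^ 2
      + 2 * ((starRingEnd ℂ B) * C).re = 0) :
    A = 0 ∧ B = 0 ∧ C = 0 ∧ D = 0 ∧ E = 0 := by
  set w : ℂ := A * z + D * (starRingEnd ℂ z) with hwdef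
  have hu : B * (x:ℂ) - C * (y:ℂ) = Complex.I * w := by
    rw [hwdef]
    linear_combination (-Complex.I) * hbal + (B*(x:ℂ) - C*(y:ℂ)) * Complex.I_sq
  have h1 : (B*(x:ℂ) - C*(y:ℂ)).re = (Complex.I*w).re := by rw [hu]
  have h2 : (B*(x:ℂ) - C*(y:ℂ)).im = (Complex.I*w).im := by rw [hu]
  simp [Complex.mul_re, Complex.mul_im] at h1 h2
  have key : (x+y) * ((starRingEnd ℂ B)*C).re
      = x * Complex.normSq B + y * Complex.normSq C
        + ((starRingEnd ℂ w)*C).im + ((starRingEnd ℂ B)*w).im := by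
    simp [Complex.normSq_apply, Complex.mul_re, Complex.mul_im]
    linear_combination (C.re - B.re) * h1 + (C.im - B.im) * h2
  set nA := ‖A‖
  set nB := ‖B‖
  set nC := ‖C‖
  set nD := ‖D‖
  set nE := ‖E‖
  set nz := ‖z‖
  set aw := ‖w‖ with hawdef
  have hnB : 0 ≤ nB := norm_nonneg B
  have hnC : 0 ≤ nC := norm_nonneg C
  have him1 : -(aw * nC) ≤ ((starRingEnd ℂ w)*C).im := by
    have h := Complex.abs_im_le_norm ((starRingEnd ℂ w)*C)
    have h' : ‖(starRingEnd ℂ w)*C‖ = aw * nC := by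
      rw [norm_mul, Complex.norm_conj]
    rw [h'] at h
    linarith [le_abs_self (((starRingEnd ℂ w)*C).im), neg_abs_le (((starRingEnd ℂ w)*C).im)]
  have him2 : -(aw * nB) ≤ ((starRingEnd ℂ B)*w).im := by
    have h := Complex.abs_im_le_norm ((starRingEnd ℂ B)*w)
    have h' : ‖(starRingEnd ℂ B)*w‖ = nB * aw := by
      rw [norm_mul, Complex.norm_conj]
    rw [h'] at h
    nlinarith [le_abs_self (((starRingEnd ℂ B)*w).im), neg_abs_le (((starRingEnd ℂ B)*w).im)]
  have hwb : aw ≤ (nA + nD) * nz := by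
    rw [hawdef, hwdef]
    calc ‖A*z + D*(starRingEnd ℂ z)‖
        ≤ ‖A*z‖ + ‖D*(starRingEnd ℂ z)‖ := norm_add_le _ _
      _ = (nA + nD) * nz := by rw [norm_mul, norm_mul, Complex.norm_conj]; ring
  have hsqB : nB^2 = Complex.normSq B := Complex.sq_norm B
  have hsqC : nC^2 = Complex.normSq C := Complex.sq_norm C
  rw [← hsqB, ← hsqC] at key
  have hw' : aw * (nB + nC) ≤ (nA + nD) * nz * (nB + nC) :=
    mul_le_mul_of_nonneg_right hwb (by linarith)
  have hw'' : aw*nB + aw*nC ≤ (nA+nD)*nz*(nB+nC) := by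
    calc aw*nB + aw*nC = aw*(nB+nC) := by ring
      _ ≤ (nA+nD)*nz*(nB+nC) := hw'
  have hr : ((starRingEnd ℂ B)*C).re = -(nA^2+nD^2+nE^2)/2 := by linarith
  rw [hr] at key
  have main : x*nB^2 + y*nC^2 + (x+y)*(nA^2+nD^2+nE^2)/2 ≤ (nA+nD)*nz*(nB+nC) := by
    linarith [key, him1, him2, hw'']
  obtain ⟨hA0, hB0, hC0, hD0, hE0⟩ :=
    aux_real nA nB nC nD nE nz x y (norm_nonneg A) hnB hnC (norm_nonneg D)
      (norm_nonneg E) (norm_nonneg z) hx hy hxy main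
  exact ⟨norm_eq_zero.mp hA0, norm_eq_zero.mp hB0, norm_eq_zero.mp hC0,
    norm_eq_zero.mp hD0, norm_eq_zero.mp hE0⟩
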